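/- A finite bipartite tournament D is acyclic if and only if D is isomorphic to D_X for some finite nonempty set X of positive integers, where D_X has vertex set X and arcs ab whenever a < b and a, b have different parities. -/

import Mathlib

/-- `f` gives the partite set (as a `Bool`) of each vertex; `A` is the arc relation.
`IsBipTournament f A` says `A` is an orientation of the complete bipartite graph with
(nonempty) partite sets `f ⁻¹ true` and `f ⁻¹ false`. -/
def IsBipTournament {V : Type*} (f : V → Bool) (A : V → V → Prop) : Prop :=
  (∃ v, f v = true) ∧ (∃ v, f v = false) ∧
  (∀ u v, f u = f v → ¬ A u v) ∧ (∀ u v, f u ≠ f v → (A u v ↔ ¬ A v u))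

/-- `T` is a tournament (on the whole vertex type). -/
def IsTournament {V : Type*} (T : V → V → Prop) : Prop :=
  (∀ v, ¬ T v v) ∧ ∀ u v, u ≠ v → (T u v ↔ ¬ T v u)

/-- `T` is a tournament completion of the digraph with arc relation `A`. -/
def IsCompletion {V : Type*} (A T : V → V → Prop) : Prop :=
  IsTournament T ∧ ∀ u v, A u v → T u v
/-- Cyclic successor in `Fin k`. -/
def cyc {k : ℕ} (i : Fin k) : Fin k :=
  ⟨(i.val + 1) % k, Nat.mod_lt _ (lt_of_le_of_lt (Nat.zero_le _) i.isLt)⟩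

/-- `c` lists the vertices of a directed cycle of length `k` in the digraph `A`. -/
def IsDicycle {V : Type*} (A : V → V → Prop) (k : ℕ) (c : Fin k → V) : Prop :=
  2 ≤ k ∧ Function.Injective c ∧ ∀ i, A (c i) (c (cyc i))

/-- The digraph `A` has no directed cycle. -/
def Acyclic {V : Type*} (A : V → V → Prop) : Prop :=
  ¬ ∃ (k : ℕ) (c : Fin k → V), IsDicycle A k c

section Aux

open Relation

private lemma bipN_pos (r : ℕ) (b : Bool) : 0 < 2 * (r + 1) + (if b then 1 else 0) := by
  cases b <;> simp

private lemma bipN_mod (r : ℕ) (b : Bool) :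
    (2 * (r + 1) + (if b then 1 else 0)) % 2 = (if b then 1 else 0) := by
  cases b <;> simp <;> omega

private lemma bipN_lt {r r' : ℕ} (b b' : Bool) (h : r < r') :
    2 * (r + 1) + (if b then 1 else 0) < 2 * (r' + 1) + (if b' then 1 else 0) := by
  cases b <;> cases b' <;> simp <;> omega

private lemma bipN_inj {r r' : ℕ} {b b' : Bool}
    (h : 2 * (r + 1) + (if b then 1 else 0) = 2 * (r' + 1) + (if b' then 1 else 0)) :
    r = r' ∧ b = b' := by
  cases b <;> cases b' <;> simp at h ⊢ <;> omega

private lemma acyclic_irrefl_transGen {V : Type*} [Fintype V] {A : V → V → Prop}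
    (hirr : ∀ v, ¬ A v v) (hac : Acyclic A) : ∀ v, ¬ Relation.TransGen A v v := by
  intro v hv
  classical
  let S := {u : V // Relation.TransGen A u v ∧ Relation.TransGen A v u}
  have hsucc : ∀ u : S, ∃ w : S, A u.1 w.1 := by
    rintro ⟨u, huv, hvu⟩
    obtain ⟨w, hw1, hw2⟩ := Relation.TransGen.head'_iff.mp huv
    rcases Relation.reflTransGen_iff_eq_or_transGen.mp hw2 with rfl | hwv
    · exact ⟨⟨v, hv, hv⟩, hw1⟩
    · exact ⟨⟨w, hwv, hvu.tail hw1⟩, hw1⟩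
  choose g hg using hsucc
  let it : ℕ → S := fun n => g^[n] ⟨v, hv, hv⟩
  have hstep : ∀ n, A (it n).1 (it (n + 1)).1 := by
    intro n
    have hh : it (n + 1) = g (it n) := Function.iterate_succ_apply' g n _
    rw [hh]; exact hg (it n)
  obtain ⟨m, n, hmn, heq⟩ := Finite.exists_ne_map_eq_of_infinite it
  have hP : ∃ j, ∃ i, i < j ∧ it j = it i := by
    rcases Nat.lt_or_ge m n with h' | h'
    · exact ⟨n, m, h', heq.symm⟩
    · exact ⟨m, n, h'.lt_of_ne' hmn, heq⟩
  obtain ⟨i0, hi0, heq0⟩ := Nat.find_spec hP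
  set j0 := Nat.find hP with hj0
  set k := j0 - i0 with hk
  have hkadd : i0 + k = j0 := by omega
  have hk2 : 2 ≤ k := by
    rcases Nat.lt_or_ge k 2 with h2 | h2
    · exfalso
      have hk1 : k = 1 := by omega
      have := hstep i0
      have he : it (i0 + 1) = it i0 := by
        have : i0 + 1 = j0 := by omega
        rw [this, heq0]
      rw [he] at this
      exact hirr _ this
    · exact h2
  refine hac ⟨k, fun t => (it (i0 + t.1)).1, hk2, ?_, ?_⟩
  · intro t t' hco
    have hsub : it (i0 + t.1) = it (i0 + t'.1) := Subtype.coe_injective hco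
    by_contra hne
    have hvne : t.1 ≠ t'.1 := fun hh => hne (Fin.ext hh)
    rcases Nat.lt_or_ge t.1 t'.1 with hlt | hge
    · have hj : i0 + t'.1 < j0 := by have := t'.2; omega
      exact Nat.find_min hP hj ⟨i0 + t.1, by omega, hsub.symm⟩
    · have hlt : t'.1 < t.1 := by omega
      have hj : i0 + t.1 < j0 := by have := t.2; omega
      exact Nat.find_min hP hj ⟨i0 + t'.1, by omega, hsub⟩
  · intro t
    show A (it (i0 + t.1)).1 (it (i0 + (t.1 + 1) % k)).1
    rcases Nat.lt_or_ge (t.1 + 1) k with h1 | h1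
    · rw [Nat.mod_eq_of_lt h1, ← Nat.add_assoc]
      exact hstep (i0 + t.1)
    · have ht : t.1 + 1 = k := by have := t.2; omega
      rw [ht, Nat.mod_self, Nat.add_zero, ← heq0]
      have : j0 = (i0 + t.1) + 1 := by omega
      rw [this]
      exact hstep (i0 + t.1)

end Aux


/-- A finite bipartite tournament is acyclic iff it is isomorphic to `D_X` for some
finite nonempty set `X` of positive integers, where `D_X` has vertex set `X` and
arcs `a → b` whenever `a < b` and `a, b` have different parities. -/
theorem stmt_3 {V : Type*} [Fintype V] (f : V → Bool) (A : V → V → Prop)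
    (h : IsBipTournament f A) :
    Acyclic A ↔
      ∃ X : Finset ℕ, X.Nonempty ∧ (∀ a ∈ X, 0 < a) ∧
        ∃ e : V ≃ {a : ℕ // a ∈ X},
          ∀ u v, A u v ↔ ((e u : ℕ) < (e v : ℕ) ∧ (e u : ℕ) % 2 ≠ (e v : ℕ) % 2) := by
  obtain ⟨⟨vt, hvt⟩, ⟨vf, hvf⟩, hno, hcmp⟩ := h
  have hirr : ∀ v, ¬ A v v := fun v => hno v v rfl
  constructor
  · intro hac
    classical
    have htg : ∀ v, ¬ Relation.TransGen A v v := acyclic_irrefl_transGen hirr hac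
    haveI : IsPartialOrder V (Relation.ReflTransGen A) :=
      { refl := fun a => Relation.ReflTransGen.refl
        trans := fun a b c hab hbc => hab.trans hbc
        antisymm := fun a b hab hba => by
          rcases Relation.reflTransGen_iff_eq_or_transGen.mp hab with rfl | hab'
          · rfl
          · rcases Relation.reflTransGen_iff_eq_or_transGen.mp hba with rfl | hba'
            · rfl
            · exact absurd (hab'.trans hba') (htg a) }
    obtain ⟨s, hlin, hsub⟩ := extend_partialOrder (Relation.ReflTransGen A)
    haveI := hlin
    letI : LinearOrder V :=
      { le := s
        le_refl := fun a => refl_of s a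
        le_trans := fun a b c => trans_of s
        le_antisymm := fun a b => antisymm_of s
        le_total := fun a b => total_of s a b
        toDecidableLE := Classical.decRel s }
    let e0 := monoEquivOfFin V rfl
    let rk : V → ℕ := fun v => (e0.symm v : ℕ)
    let N : V → ℕ := fun v => 2 * (rk v + 1) + (if f v then 1 else 0)
    have hrk : ∀ u v, A u v → rk u < rk v := by
      intro u v huv
      have hne : u ≠ v := fun hh => hirr v (hh ▸ huv)
      have hle : s u v := hsub u v (Relation.ReflTransGen.single huv)
      have hlt : u < v := lt_of_le_of_ne hle hne
      exact e0.symm.strictMono hlt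
    have hNlt : ∀ u v, rk u < rk v → N u < N v := fun u v hh => bipN_lt (f u) (f v) hh
    have hNinj : Function.Injective N := by
      intro u v hh
      obtain ⟨hr, -⟩ := bipN_inj hh
      have : e0.symm u = e0.symm v := Fin.ext hr
      exact e0.symm.injective this
    refine ⟨Finset.image N Finset.univ, ⟨N vt, Finset.mem_image_of_mem N (Finset.mem_univ vt)⟩,
      ?_, ?_⟩
    · intro a ha
      rw [Finset.mem_image] at ha
      obtain ⟨v, -, rfl⟩ := ha
      exact bipN_pos (rk v) (f v)
    · refine ⟨Equiv.ofBijective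
        (fun v => ⟨N v, Finset.mem_image_of_mem N (Finset.mem_univ v)⟩)
        ⟨fun u v hh => hNinj (congrArg Subtype.val hh), ?_⟩, ?_⟩
      · rintro ⟨a, ha⟩
        rw [Finset.mem_image] at ha
        obtain ⟨v, -, rfl⟩ := ha
        exact ⟨v, rfl⟩
      · intro u v
        have hNmod : ∀ w, N w % 2 = (if f w then 1 else 0) := fun w => bipN_mod (rk w) (f w)
        have key : A u v ↔ (N u < N v ∧ N u % 2 ≠ N v % 2) := by
          constructor
          · intro huv
            have hfne : f u ≠ f v := fun hh => hno u v hh huv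
            refine ⟨hNlt u v (hrk u v huv), ?_⟩
            rw [hNmod, hNmod]
            cases hfu : f u <;> cases hfv : f v <;>
              first
              | exact absurd (hfu.trans hfv.symm) hfne
              | decide
          · rintro ⟨hlt, hpar⟩
            have hfne : f u ≠ f v := by
              intro hh
              rw [hNmod, hNmod, hh] at hpar
              exact hpar rfl
            by_contra hnuv
            have hvu : A v u := (hcmp v u (Ne.symm hfne)).mpr hnuv
            exact absurd (hNlt v u (hrk v u hvu)) (by omega)
        exact key
  · rintro ⟨X, -, -, e, he⟩ ⟨k, c, hk2, hinj, harc⟩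
    have hkpos : 0 < k := by omega
    have hmono : ∀ i, (e (c i) : ℕ) < (e (c (cyc i)) : ℕ) := fun i => ((he _ _).mp (harc i)).1
    have hle : ∀ m (hm : m < k), (e (c ⟨0, hkpos⟩) : ℕ) ≤ (e (c ⟨m, hm⟩) : ℕ) := by
      intro m
      induction m with
      | zero => intro hm; exact le_refl _
      | succ p ih =>
        intro hm
        have hp : p < k := by omega
        have hstep := hmono ⟨p, hp⟩
        have hcyc : cyc ⟨p, hp⟩ = (⟨p + 1, hm⟩ : Fin k) := by
          apply Fin.ext
          simp [cyc, Nat.mod_eq_of_lt hm]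
        rw [hcyc] at hstep
        exact le_trans (ih hp) (le_of_lt hstep)
    have h1 : k - 1 < k := by omega
    have hwrap := hmono ⟨k - 1, h1⟩
    have hcyc : cyc ⟨k - 1, h1⟩ = (⟨0, hkpos⟩ : Fin k) := by
      apply Fin.ext
      show (k - 1 + 1) % k = 0
      rw [Nat.sub_add_cancel hkpos, Nat.mod_self]
    rw [hcyc] at hwrap
    have := hle (k - 1) h1
    omega
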